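/- VCC convergence in diameter iterations: consider sets V_i(t) of parameter indices at nodes of a strongly connected directed graph, initialized as V_i(0) = vert(C_i) and updated by V_i(t+1) = vert(V_i(t) ∪ ∪_{j ∈ N_in(i)} V_j(t)). Then after T = diam(G) iterations, Sat(V_i(T)) = Sat(C) for every node i, where C = ∪_i C_i; hence the unique local optimal solution equals the global scenario solution. -/

import Mathlib

def SatP {ι : Type*} {d l : ℕ} (X : Set (Fin d → ℝ))
    (f : (Fin d → ℝ) → (Fin l → ℝ) → ℝ) (δ : ι → Fin l → ℝ)
    (S : Set ι) : Set (Fin d → ℝ) :=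
  {x ∈ X | ∀ j ∈ S, f x (δ j) ≤ 0}

/-- Indices of the constraints whose parameter vectors are extreme points of
the convex hull of the parameters indexed by `S`. -/
def vertP {ι : Type*} {l : ℕ} (δ : ι → Fin l → ℝ) (S : Set ι) : Set ι :=
  {j ∈ S | δ j ∈ Set.extremePoints ℝ (convexHull ℝ (δ '' S))}

theorem satP_anti {ι : Type*} {d l : ℕ} (X : Set (Fin d → ℝ))
    (f : (Fin d → ℝ) → (Fin l → ℝ) → ℝ) (δ : ι → Fin l → ℝ)
    {S S' : Set ι} (h : S ⊆ S') : SatP X f δ S' ⊆ SatP X f δ S :=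
  fun _ hx => ⟨hx.1, fun j hj => hx.2 j (h hj)⟩

theorem satP_vertP {ι : Type*} {d l : ℕ} (X : Set (Fin d → ℝ))
    (f : (Fin d → ℝ) → (Fin l → ℝ) → ℝ) (δ : ι → Fin l → ℝ)
    (Δ : Set (Fin l → ℝ)) (hδ : ∀ j, δ j ∈ Δ)
    (hconv : ∀ x ∈ X, ConvexOn ℝ Δ (f x))
    {S : Set ι} (hS : S.Finite) :
    SatP X f δ (vertP δ S) = SatP X f δ S := by
  refine Set.Subset.antisymm ?_ (satP_anti X f δ (fun j hj => hj.1))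
  rintro x ⟨hxX, hx⟩
  refine ⟨hxX, fun j hj => ?_⟩
  set K := convexHull ℝ (δ '' S) with hK
  have hKcv : Convex ℝ K := convex_convexHull ℝ _
  have hKcp : IsCompact K := (hS.image δ).isCompact_convexHull (𝕜 := ℝ)
  have hE : K.extremePoints ℝ ⊆ δ '' S := extremePoints_convexHull_subset
  have hEfin : (K.extremePoints ℝ).Finite := (hS.image δ).subset hE
  have hKeq : convexHull ℝ (K.extremePoints ℝ) = K := by
    have := closure_convexHull_extremePoints hKcp hKcv
    rwa [(hEfin.isCompact_convexHull (𝕜 := ℝ)).isClosed.closure_eq] at this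
  have hT : Convex ℝ {y ∈ Δ | f x y ≤ 0} := (hconv x hxX).convex_le 0
  have hsub : convexHull ℝ (K.extremePoints ℝ) ⊆ {y ∈ Δ | f x y ≤ 0} := by
    refine convexHull_min ?_ hT
    rintro e he
    obtain ⟨j', hj', rfl⟩ := hE he
    exact ⟨hδ j', hx j' ⟨hj', he⟩⟩
  have hjK : δ j ∈ K := subset_convexHull ℝ _ ⟨j, hj, rfl⟩
  rw [hKeq] at hsub
  exact (hsub hjK).2

/-- VCC convergence: after `D = diam(G)` iterations of the vertex constraints
consensus update, each node's feasible set equals the global feasible set,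
hence the local optimal solutions coincide with the global scenario solution. -/
theorem vcc_convergence {ι : Type*} {d l n : ℕ} (X : Set (Fin d → ℝ))
    (a : Fin d → ℝ) (f : (Fin d → ℝ) → (Fin l → ℝ) → ℝ) (δ : ι → Fin l → ℝ)
    (Δ : Set (Fin l → ℝ)) (hΔ : Convex ℝ Δ) (hδ : ∀ j, δ j ∈ Δ)
    (hconv : ∀ x ∈ X, ConvexOn ℝ Δ (f x))
    (hXcp : IsCompact X) (hXcv : Convex ℝ X)
    (adj : Fin n → Fin n → Prop) (D : ℕ)
    -- strong connectivity with diameter at most `D`: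
    (hdiam : ∀ i j : Fin n, ∃ len ≤ D, ∃ p : ℕ → Fin n,
      p 0 = i ∧ p len = j ∧ ∀ k < len, adj (p k) (p (k + 1)))
    (Ci : Fin n → Set ι) (hCfin : ∀ i, (Ci i).Finite)
    (V : Fin n → ℕ → Set ι)
    (hV0 : ∀ i, V i 0 = vertP δ (Ci i))
    (hVstep : ∀ i t, V i (t + 1) =
      vertP δ (V i t ∪ ⋃ j ∈ {j : Fin n | adj j i}, V j t)) :
    ∀ i : Fin n,
      SatP X f δ (V i D) = SatP X f δ (⋃ k, Ci k) ∧
      ∀ x : Fin d → ℝ,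
        ((x ∈ SatP X f δ (V i D) ∧ ∀ y ∈ SatP X f δ (V i D),
            (∑ k, a k * x k) ≤ ∑ k, a k * y k) ↔
          (x ∈ SatP X f δ (⋃ k, Ci k) ∧ ∀ y ∈ SatP X f δ (⋃ k, Ci k),
            (∑ k, a k * x k) ≤ ∑ k, a k * y k)) := by
  -- finiteness of all V i t
  have Vfin : ∀ t i, (V i t).Finite := by
    intro t
    induction t with
    | zero => intro i; rw [hV0]; exact (hCfin i).subset (fun j hj => hj.1)
    | succ t ih =>
        intro i
        rw [hVstep]
        refine Set.Finite.subset ?_ (fun j hj => hj.1)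
        exact (ih i).union (Set.Finite.biUnion (Set.toFinite _) (fun j _ => ih j))
  -- V i t ⊆ ⋃ k, Ci k
  have Vsub : ∀ t i, V i t ⊆ ⋃ k, Ci k := by
    intro t
    induction t with
    | zero =>
        intro i j hj
        rw [hV0] at hj
        exact Set.mem_iUnion.2 ⟨i, hj.1⟩
    | succ t ih =>
        intro i j hj
        rw [hVstep] at hj
        rcases hj.1 with h | h
        · exact ih i h
        · obtain ⟨k, -, hk⟩ := Set.mem_iUnion₂.1 h
          exact ih k hk
  -- one consensus step
  have step : ∀ i t, SatP X f δ (V i (t + 1)) = SatP X f δ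
      (V i t ∪ ⋃ j ∈ {j : Fin n | adj j i}, V j t) := by
    intro i t
    rw [hVstep]
    exact satP_vertP X f δ Δ hδ hconv
      ((Vfin t i).union (Set.Finite.biUnion (Set.toFinite _) (fun j _ => Vfin t j)))
  have step_self : ∀ i t, SatP X f δ (V i (t + 1)) ⊆ SatP X f δ (V i t) := by
    intro i t
    rw [step]
    exact satP_anti X f δ Set.subset_union_left
  have step_adj : ∀ i j t, adj j i →
      SatP X f δ (V i (t + 1)) ⊆ SatP X f δ (V j t) := by
    intro i j t hji
    rw [step]
    refine satP_anti X f δ (fun m hm => Or.inr ?_)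
    exact Set.mem_biUnion hji hm
  have down : ∀ i t, SatP X f δ (V i t) ⊆ SatP X f δ (V i 0) := by
    intro i t
    induction t with
    | zero => exact le_refl _
    | succ t ih => exact (step_self i t).trans ih
  have sat0 : ∀ i, SatP X f δ (V i 0) = SatP X f δ (Ci i) := by
    intro i
    rw [hV0]
    exact satP_vertP X f δ Δ hδ hconv (hCfin i)
  intro i
  have key : SatP X f δ (V i D) = SatP X f δ (⋃ k, Ci k) := by
    apply Set.Subset.antisymm
    · -- ⊆ : use the path from any node k to i
      intro x hx
      refine ⟨hx.1, fun j hj => ?_⟩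
      obtain ⟨k, hjk⟩ := Set.mem_iUnion.1 hj
      obtain ⟨len, hlen, p, hp0, hplen, hpadj⟩ := hdiam k i
      have claim : ∀ s, s ≤ len →
          SatP X f δ (V i D) ⊆ SatP X f δ (V (p (len - s)) (D - s)) := by
        intro s
        induction s with
        | zero =>
            intro _
            simp only [Nat.sub_zero, hplen]
            exact le_refl _
        | succ s ih =>
            intro hs
            have hs' : s ≤ len := Nat.le_of_succ_le hs
            have h1 : len - s - 1 < len := by omega
            have hadj : adj (p (len - s - 1)) (p (len - s)) := by
              have := hpadj (len - s - 1) h1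
              have e : len - s - 1 + 1 = len - s := by omega
              rwa [e] at this
            have hD : D - s = (D - (s + 1)) + 1 := by omega
            have e2 : len - (s + 1) = len - s - 1 := by omega
            refine (ih hs').trans ?_
            rw [hD, e2]
            exact step_adj _ _ _ hadj
      have hfin := claim len (le_refl len)
      simp only [Nat.sub_self, hp0] at hfin
      have : x ∈ SatP X f δ (Ci k) := by
        rw [← sat0 k]
        exact down k (D - len) (hfin hx)
      exact this.2 j hjk
    · exact satP_anti X f δ (Vsub D i)
  refine ⟨key, fun x => ?_⟩
  rw [key]
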